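/- Fix integers m ≥ 1 and 3 ≤ k ≤ n, and let β_r be the coefficient of x^r in P(x) = ∏_{i=0}^{k-1} (1 - i/n + x)^{m+1}. Then for every integer r with k-1 ≤ r ≤ k(m+1) - 1: β_{r+1} · S(r+1, k-1) ≤ ((m+1)(r+1)²/2) · (1 - (k-1)/n)^{-k(m+1)} · β_r · S(r, k-1), where S denotes the Stirling number of the second kind. -/

import Mathlib

open Polynomial

/-- Stirling numbers of the second kind: `stirling2 n k` is the number of partitions of an
`n`-element set into `k` nonempty blocks, via the standard recurrence
`S(n+1, k+1) = (k+1) S(n, k+1) + S(n, k)`. -/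
def stirling2 : ℕ → ℕ → ℕ
  | 0, 0 => 1
  | 0, _ + 1 => 0
  | _ + 1, 0 => 0
  | n + 1, k + 1 => (k + 1) * stirling2 n (k + 1) + stirling2 n k

lemma stirling2_succ (n k : ℕ) :
    stirling2 (n+1) (k+1) = (k+1) * stirling2 n (k+1) + stirling2 n k := rfl

lemma stirling2_eq_zero : ∀ n k : ℕ, n < k → stirling2 n k = 0 := by
  intro n
  induction n with
  | zero => intro k h; cases k with | zero => omega | succ j => rfl
  | succ n ih =>
    intro k h
    cases k with
    | zero => omega
    | succ j => rw [stirling2_succ, ih _ (by omega), ih _ (by omega)]; ring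

lemma stirling2_self : ∀ n : ℕ, stirling2 n n = 1 := by
  intro n
  induction n with
  | zero => rfl
  | succ n ih => rw [stirling2_succ, stirling2_eq_zero _ _ (by omega), ih]; ring

lemma stirling2_succ_self : ∀ n : ℕ, 2 * stirling2 (n+1) n = n * (n+1) := by
  intro n
  induction n with
  | zero => rfl
  | succ n ih =>
    rw [stirling2_succ, stirling2_self]
    nlinarith [ih]

lemma stirling_ratio : ∀ r j : ℕ, j + 1 ≤ r →
    2 * stirling2 r j ≤ j * (j+1) * stirling2 r (j+1) := by
  intro r
  induction r with
  | zero => intro j h; omega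
  | succ r ih =>
    intro j h
    match j with
    | 0 =>
      have : stirling2 (r+1) 0 = 0 := rfl
      simp [this]
    | j+1 =>
      rcases Nat.lt_or_ge (j+1) r with hlt | hge
      · have ih1 := ih (j+1) (by omega)
        have ih2 := ih j (by omega)
        rw [stirling2_succ, stirling2_succ]
        nlinarith [ih1, ih2, Nat.zero_le (stirling2 r (j+1)), Nat.zero_le (stirling2 r (j+2))]
      · have hr : r = j + 1 := by omega
        subst hr
        have h1 := stirling2_succ_self (j+1)
        rw [stirling2_self]
        nlinarith [h1]

lemma stirling_main (k r : ℕ) (hk : 3 ≤ k) (hr : k - 1 ≤ r) :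
    2 * stirling2 (r+1) (k-1) ≤ (k-1) * k * stirling2 r (k-1) := by
  obtain ⟨j, rfl⟩ : ∃ j, k = j + 2 := ⟨k - 2, by omega⟩
  have hk1 : j + 2 - 1 = j + 1 := by omega
  rw [hk1] at hr ⊢
  rw [stirling2_succ]
  have h := stirling_ratio r j (by omega)
  nlinarith [h, Nat.zero_le (stirling2 r (j+1))]

/-- `GoodP c t P`: all coefficients of `P` are nonnegative and successive coefficients
satisfy `(s+1)·c·P_{s+1} ≤ (t-s)·P_s`. -/
def GoodP (c : ℝ) (t : ℕ) (P : Polynomial ℝ) : Prop :=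
  (∀ s, 0 ≤ P.coeff s) ∧
    ∀ s : ℕ, ((s:ℝ)+1) * c * P.coeff (s+1) ≤ ((t:ℝ) - (s:ℝ)) * P.coeff s

lemma GoodP.mul_linear {c : ℝ} {t : ℕ} {P : Polynomial ℝ} (h : GoodP c t P)
    {a : ℝ} (hc : 0 < c) (hca : c ≤ a) :
    GoodP c (t+1) ((C a + X) * P) := by
  obtain ⟨h0, h1⟩ := h
  have ha : 0 ≤ a := le_trans hc.le hca
  have hco : ∀ s : ℕ, ((C a + X) * P).coeff (s+1) = a * P.coeff (s+1) + P.coeff s := by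
    intro s
    rw [add_mul, coeff_add, coeff_C_mul, coeff_X_mul]
  have hco0 : ((C a + X) * P).coeff 0 = a * P.coeff 0 := by
    rw [add_mul, coeff_add, coeff_C_mul, mul_coeff_zero, coeff_X_zero, zero_mul, add_zero]
  constructor
  · intro s
    cases s with
    | zero => rw [hco0]; exact mul_nonneg ha (h0 0)
    | succ u => rw [hco]; exact add_nonneg (mul_nonneg ha (h0 _)) (h0 _)
  · intro s
    cases s with
    | zero =>
      rw [show (0:ℕ)+1 = 0+1 from rfl, hco 0, hco0]
      have hB := h1 0
      push_cast at hB ⊢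
      nlinarith [h0 0, h0 1, hB]
    | succ u =>
      rw [hco (u+1), hco u]
      have hA := mul_le_mul_of_nonneg_left (h1 (u+1)) ha
      have hB := h1 u
      have hC : c * P.coeff (u+1) ≤ a * P.coeff (u+1) :=
        mul_le_mul_of_nonneg_right hca (h0 _)
      push_cast at hA hB ⊢
      nlinarith [hA, hB, hC]

lemma goodP_pow_mul (c a : ℝ) (hc : 0 < c) (hca : c ≤ a) (M : ℕ) :
    ∀ (t : ℕ) (P : Polynomial ℝ), GoodP c t P →
      GoodP c (M + t) ((C a + X)^M * P) := by
  induction M with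
  | zero => intro t P h; simpa using h
  | succ M ih =>
    intro t P h
    have h2 := (ih t P h).mul_linear hc hca
    have he : (C a + X)^(M+1) * P = (C a + X) * ((C a + X)^M * P) := by ring
    rw [he, show M+1+t = M+t+1 from by omega]
    exact h2

lemma goodP_one (c : ℝ) : GoodP c 0 (1 : Polynomial ℝ) := by
  constructor
  · intro s
    rw [coeff_one]
    split <;> norm_num
  · intro s
    rw [coeff_one, coeff_one]
    cases s with
    | zero => norm_num
    | succ u =>
      simp

lemma goodP_prod (c : ℝ) (hc : 0 < c) (g : ℕ → ℝ) (M : ℕ) :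
    ∀ k : ℕ, (∀ i, i < k → c ≤ g i) →
      GoodP c (k*M) (∏ i ∈ Finset.range k, (C (g i) + X)^M) := by
  intro k
  induction k with
  | zero => intro _; simpa using goodP_one c
  | succ k ih =>
    intro hg
    rw [Finset.prod_range_succ, mul_comm (∏ i ∈ Finset.range k, (C (g i) + X)^M),
      show (k+1)*M = M + k*M from by ring]
    exact goodP_pow_mul c (g k) hc (hg k (by omega)) M (k*M) _
      (ih fun i hi => hg i (by omega))

set_option maxHeartbeats 1000000 in
theorem stmt9 (m k n : ℕ) (hm : 1 ≤ m) (hk : 3 ≤ k) (hkn : k ≤ n) :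
    ∀ r : ℕ, k - 1 ≤ r → r ≤ k * (m + 1) - 1 →
      (∏ i ∈ Finset.range k,
            (Polynomial.C (1 - (i : ℝ) / n) + Polynomial.X) ^ (m + 1)).coeff (r + 1) *
          (stirling2 (r + 1) (k - 1) : ℝ) ≤
        ((m + 1 : ℝ) * (r + 1 : ℝ) ^ 2 / 2) *
          (1 - ((k : ℝ) - 1) / n) ^ (-(k * (m + 1) : ℤ)) *
          (∏ i ∈ Finset.range k,
            (Polynomial.C (1 - (i : ℝ) / n) + Polynomial.X) ^ (m + 1)).coeff r *
          (stirling2 r (k - 1) : ℝ) := by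
  intro r hr1 hr2
  have hn0 : (0:ℝ) < n := by
    have h3 : 3 ≤ n := le_trans hk hkn
    exact_mod_cast (by omega : 0 < n)
  set c : ℝ := 1 - ((k:ℝ) - 1) / n with hcdef
  have hkR : ((k:ℝ) - 1) < n := by
    have : (k:ℝ) ≤ n := by exact_mod_cast hkn
    linarith
  have hc : 0 < c := by
    rw [hcdef, sub_pos, div_lt_one hn0]
    exact hkR
  have hk3R : (3:ℝ) ≤ (k:ℝ) := by exact_mod_cast hk
  have hc1 : c ≤ 1 := by
    rw [hcdef]
    have h1 : (0:ℝ) ≤ ((k:ℝ) - 1) / n := by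
      apply div_nonneg _ hn0.le
      linarith
    linarith
  have hg : ∀ i, i < k → c ≤ 1 - (i:ℝ)/n := by
    intro i hi
    have hik : (i:ℝ) ≤ (k:ℝ) - 1 := by
      have : (i:ℝ) + 1 ≤ (k:ℝ) := by exact_mod_cast hi
      linarith
    rw [hcdef]
    gcongr
  obtain ⟨h0, h1⟩ := goodP_prod c hc (fun i => 1 - (i:ℝ)/n) (m+1) k hg
  set P : Polynomial ℝ :=
    ∏ i ∈ Finset.range k, (Polynomial.C (1 - (i : ℝ) / n) + Polynomial.X) ^ (m + 1) with hP
  set b0 : ℝ := P.coeff r with hb0def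
  set b1 : ℝ := P.coeff (r+1) with hb1def
  set s0 : ℝ := (stirling2 r (k - 1) : ℝ) with hs0def
  set s1 : ℝ := (stirling2 (r + 1) (k - 1) : ℝ) with hs1def
  have hb0 : 0 ≤ b0 := h0 r
  have hb1 : 0 ≤ b1 := h0 (r+1)
  have hs0 : 0 ≤ s0 := Nat.cast_nonneg _
  have hs1 : 0 ≤ s1 := Nat.cast_nonneg _
  -- key coefficient inequality
  have key1 : ((r:ℝ)+1) * c * b1 ≤ (k:ℝ) * ((m:ℝ)+1) * b0 := by
    have h := h1 r
    have hcast : ((k*(m+1) : ℕ) : ℝ) = (k:ℝ) * ((m:ℝ)+1) := by push_cast; ring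
    rw [hcast] at h
    have hrnn : (0:ℝ) ≤ (r:ℝ) := Nat.cast_nonneg r
    nlinarith [h, hb0, hrnn]
  -- key Stirling inequality
  have key2 : 2 * s1 ≤ ((k:ℝ) - 1) * (k:ℝ) * s0 := by
    have h := stirling_main k r hk hr1
    have h' : ((2 * stirling2 (r+1) (k-1) : ℕ) : ℝ)
        ≤ (((k-1) * k * stirling2 r (k-1) : ℕ) : ℝ) := Nat.cast_le.mpr h
    push_cast [Nat.cast_sub (show 1 ≤ k by omega)] at h'
    convert h' using 2 <;> push_cast <;> ring
  -- rewrite the zpow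
  have hzp : c ^ (-(k * (m + 1) : ℤ)) = (c ^ (k*(m+1) : ℕ))⁻¹ := by
    rw [show (-(k * (m + 1) : ℤ)) = -((k*(m+1) : ℕ) : ℤ) by push_cast; ring,
      zpow_neg, zpow_natCast]
  rw [hzp]
  set D : ℕ := k * (m+1) with hD
  have hcD : 0 < c ^ D := pow_pos hc D
  have hcDc : c ^ D ≤ c := by
    calc c ^ D ≤ c ^ 1 := pow_le_pow_of_le_one hc.le hc1 (Nat.one_le_iff_ne_zero.mpr (Nat.mul_ne_zero (by omega) (by omega)))
    _ = c := pow_one c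
  have hkr : (k:ℝ) ≤ (r:ℝ) + 1 := by
    have : k ≤ r + 1 := by omega
    exact_mod_cast this
  have hr1pos : (0:ℝ) < (r:ℝ) + 1 := by positivity
  -- goal: b1 * s1 ≤ (m+1)*(r+1)^2/2 * (c^D)⁻¹ * b0 * s0
  have ht : (0:ℝ) < 2 * c ^ D * ((r:ℝ)+1) := by positivity
  rw [← mul_le_mul_iff_of_pos_right ht]
  have hR : ((m:ℝ) + 1) * ((r:ℝ) + 1) ^ 2 / 2 * (c ^ D)⁻¹ * b0 * s0
        * (2 * c ^ D * ((r:ℝ)+1))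
      = ((m:ℝ)+1) * ((r:ℝ)+1)^3 * b0 * s0 := by
    field_simp
  rw [hR]
  -- chain
  have hb1s1 : 0 ≤ 2 * ((r:ℝ)+1) * (b1 * s1) := by
    have := mul_nonneg hb1 hs1
    positivity
  have A1 : 2 * ((r:ℝ)+1) * (b1 * s1) * (c ^ D) ≤ 2 * ((r:ℝ)+1) * (b1 * s1) * c :=
    mul_le_mul_of_nonneg_left hcDc hb1s1
  have A2 : (((r:ℝ)+1) * c * b1) * (2 * s1)
      ≤ ((k:ℝ) * ((m:ℝ)+1) * b0) * (((k:ℝ) - 1) * (k:ℝ) * s0) := by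
    apply mul_le_mul key1 key2 (by positivity)
    have : (0:ℝ) ≤ (k:ℝ) * ((m:ℝ)+1) := by positivity
    exact mul_nonneg this hb0
  have Hk3 : (k:ℝ)^2 * ((k:ℝ) - 1) ≤ ((r:ℝ)+1)^3 := by
    have hkpos : (0:ℝ) ≤ (k:ℝ) := by positivity
    have h3 : (k:ℝ)^3 ≤ ((r:ℝ)+1)^3 := pow_le_pow_left₀ hkpos hkr 3
    nlinarith [sq_nonneg (k:ℝ)]
  have A3 : ((m:ℝ)+1) * ((k:ℝ)^2 * ((k:ℝ)-1)) * (b0 * s0)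
      ≤ ((m:ℝ)+1) * (((r:ℝ)+1)^3) * (b0 * s0) := by
    apply mul_le_mul_of_nonneg_right _ (mul_nonneg hb0 hs0)
    apply mul_le_mul_of_nonneg_left Hk3 (by positivity)
  linarith [A1, A2, A3]
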